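/- Let R_2 be the Leibniz algebra with basis {x, e_1, e_2, ...} and nonzero products [e_i, e_1] = e_{i+1} (i ≥ 2), [x, e_1] = -e_1 + e_2, [e_1, x] = e_1, [e_i, x] = (i-1)e_i (i ≥ 2), [x, x] = 0 (this is R_2(F,1,β) with all β_k = 0). Then R_2 satisfies the Leibniz identity and its center is trivial: any z with [z,w] = [w,z] = 0 for all w in R_2 must equal 0. -/

import Mathlib

noncomputable section

/-- The underlying space; coordinate 0 is `x`, coordinate `n ≥ 1` is `e_n`. -/
abbrev V : Type := ℕ →₀ ℂ

/-- `e_i ↦ e_{i+1}` for `i ≥ 2`, all other basis vectors to 0. -/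
def T : V →ₗ[ℂ] V :=
  Finsupp.lsum ℂ fun n => if 2 ≤ n then (Finsupp.lsingle (n + 1) : ℂ →ₗ[ℂ] V) else 0

/-- Right multiplication by `x`: `e_1 ↦ e_1`, `e_i ↦ (i-1) e_i` for `i ≥ 2`, `x ↦ 0`. -/
def A : V →ₗ[ℂ] V :=
  Finsupp.lsum ℂ fun n =>
    (if n = 1 then (1 : ℂ) else if 2 ≤ n then (n : ℂ) - 1 else 0) • Finsupp.lsingle n

/-- Bracket of `R₂ = R₂(F,1,0)`: nonzero products `[e_i,e_1] = e_{i+1}` (i ≥ 2),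
`[x,e_1] = -e_1 + e_2`, `[e_1,x] = e_1`, `[e_i,x] = (i-1)e_i` (i ≥ 2), `[x,x] = 0`. -/
def brR2 (f g : V) : V :=
  g 1 • T f + g 0 • A f +
    (f 0 * g 1) • (Finsupp.single 2 (1 : ℂ) - Finsupp.single 1 (1 : ℂ))

lemma T_single (n : ℕ) (c : ℂ) :
    T (Finsupp.single n c) = if 2 ≤ n then Finsupp.single (n+1) c else 0 := by
  simp only [T, Finsupp.lsum_single]
  split <;> simp

lemma A_single (n : ℕ) (c : ℂ) :
    A (Finsupp.single n c) =
      (if n = 1 then (1:ℂ) else if 2 ≤ n then (n : ℂ) - 1 else 0) • Finsupp.single n c := by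
  simp only [A, Finsupp.lsum_single]
  split <;> [simp; split <;> simp [Finsupp.smul_single]]

lemma A_apply (f : V) (n : ℕ) :
    A f n = (if n = 1 then (1:ℂ) else if 2 ≤ n then (n : ℂ) - 1 else 0) * f n := by
  induction f using Finsupp.induction_linear with
  | zero => simp
  | add f g hf hg => simp [hf, hg, mul_add]
  | single m c =>
    rw [A_single, Finsupp.smul_apply, smul_eq_mul]
    rcases eq_or_ne m n with rfl | h
    · simp
    · simp [Finsupp.single_apply, h]

lemma T_apply_lt (f : V) (n : ℕ) (hn : n < 3) : T f n = 0 := by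
  induction f using Finsupp.induction_linear with
  | zero => simp
  | add f g hf hg => simp [hf, hg]
  | single m c =>
    rw [T_single]
    split
    · rw [Finsupp.single_apply_eq_zero]; omega
    · simp

lemma commAT : A ∘ₗ T = T ∘ₗ A + T := by
  apply Finsupp.lhom_ext
  intro n c
  simp only [LinearMap.comp_apply, LinearMap.add_apply, T_single, A_single]
  by_cases h : 2 ≤ n
  · have h1 : n ≠ 1 := by omega
    have h2 : 2 ≤ n + 1 := by omega
    have h3 : n + 1 ≠ 1 := by omega
    simp only [if_pos h, map_smul, A_single, T_single, if_pos h2, if_neg h3, if_neg h1,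
      Finsupp.smul_single, smul_eq_mul, smul_smul, Nat.cast_add, Nat.cast_one]
    rw [← Finsupp.single_add]
    ring_nf
  · simp only [if_neg h, map_zero, LinearMap.zero_apply, zero_add]
    rcases (by omega : n = 0 ∨ n = 1) with rfl | rfl <;>
      simp [A_single, map_smul, T_single]

lemma hAT (v : V) : A (T v) = T (A v) + T v := by
  have := LinearMap.ext_iff.mp commAT v
  simpa using this

/-- the vector `e_2 - e_1` -/
def u : V := Finsupp.single 2 (1 : ℂ) - Finsupp.single 1 (1 : ℂ)

lemma brR2_eq (f g : V) : brR2 f g = g 1 • T f + g 0 • A f + (f 0 * g 1) • u := rfl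

lemma Tu : T u = Finsupp.single 3 (1 : ℂ) := by
  simp [u, map_sub, T_single]

lemma Au : A u = u := by
  simp only [u, map_sub, A_single]
  norm_num

lemma u_apply0 : u 0 = 0 := by simp [u, Finsupp.single_apply]

lemma u_apply1 : u 1 = -1 := by simp [u, Finsupp.single_apply]

lemma brR2_apply0 (f g : V) : brR2 f g 0 = 0 := by
  rw [brR2_eq]
  simp only [Finsupp.add_apply, Finsupp.smul_apply, smul_eq_mul]
  rw [T_apply_lt f 0 (by norm_num), A_apply, u_apply0]
  simp

lemma brR2_apply1 (f g : V) : brR2 f g 1 = g 0 * f 1 - f 0 * g 1 := by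
  rw [brR2_eq]
  simp only [Finsupp.add_apply, Finsupp.smul_apply, smul_eq_mul]
  rw [T_apply_lt f 1 (by norm_num), A_apply, u_apply1]
  simp
  ring

/-- `R₂(F,1,0)` satisfies the Leibniz identity and has trivial center. -/
theorem stmt19 :
    (∀ a b c : V, brR2 a (brR2 b c) = brR2 (brR2 a b) c - brR2 (brR2 a c) b) ∧
    (∀ z : V, (∀ w : V, brR2 z w = 0 ∧ brR2 w z = 0) → z = 0) := by
  constructor
  · intro a b c
    rw [brR2_eq a (brR2 b c), brR2_apply0, brR2_apply1,
        brR2_eq (brR2 a b) c, brR2_apply0 a b,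
        brR2_eq (brR2 a c) b, brR2_apply0 a c,
        brR2_eq a b, brR2_eq a c]
    simp only [map_add, map_smul, Tu, Au, hAT]
    module
  · intro z hz
    have hA : A z = 0 := by
      have h := (hz (Finsupp.single 0 1)).1
      rw [brR2_eq] at h
      simpa [Finsupp.single_apply] using h
    have hzn : ∀ n : ℕ, 1 ≤ n → z n = 0 := by
      intro n hn
      have h := congrArg (fun v : V => v n) hA
      simp only [A_apply, Finsupp.coe_zero, Pi.zero_apply] at h
      rcases (by omega : n = 1 ∨ 2 ≤ n) with rfl | h2
      · simpa using h
      · rw [if_neg (by omega), if_pos h2] at h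
        have : (n : ℂ) - 1 ≠ 0 := by
          have : (n : ℂ) ≠ 1 := by
            exact_mod_cast (by omega : (n : ℕ) ≠ 1)
          intro hc; apply this; linear_combination hc
        exact (mul_eq_zero.mp h).resolve_left this
    have hz0 : z 0 = 0 := by
      have h := (hz (Finsupp.single 1 1)).1
      rw [brR2_eq] at h
      simp only [Finsupp.single_apply] at h
      norm_num at h
      have h1 := congrArg (fun v : V => v 1) h
      simp only [Finsupp.add_apply, Finsupp.smul_apply, smul_eq_mul,
        Finsupp.coe_zero, Pi.zero_apply] at h1
      rw [T_apply_lt z 1 (by norm_num), u_apply1] at h1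
      simpa using h1
    ext n
    rcases (by omega : n = 0 ∨ 1 ≤ n) with rfl | hn
    · simpa using hz0
    · simpa using hzn n hn
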